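/- arXiv:1804.05058 — 5 statements merged into one kernel-verified Lean document; each statement's English description precedes it below -/
import Mathlib

section
/- Let n, f, m ≥ 1 and let G be a unitary on ℂⁿ ⊗ ℂ^f ⊗ ℂᵐ. Let ψ := G(e₀ ⊗ e₀ ⊗ e₀) and define the n × n matrix ϱ by ϱ_{ij} := Σ_{k<m} ψ(i, 0, k) · conj(ψ(j, 0, k)) (the subnormalized density operator obtained from the purification ψ by projecting the second register onto e₀ and tracing out the third register). Let SWAP denote the unitary on (ℂⁿ ⊗ ℂ^f) ⊗ (ℂⁿ ⊗ ℂ^f) ⊗ ℂᵐ that swaps the first two (ℂⁿ ⊗ ℂ^f) factors and acts as identity on ℂᵐ. Define V := (I_{n·f} ⊗ G†) · SWAP · (I_{n·f} ⊗ G), a unitary on ℂⁿ ⊗ ℂ^f ⊗ ℂⁿ ⊗ ℂ^f ⊗ ℂᵐ. Then for all i, j: ⟨e_i ⊗ e₀ ⊗ e₀ ⊗ e₀ ⊗ e₀, V(e_j ⊗ e₀ ⊗ e₀ ⊗ e₀ ⊗ e₀)⟩ = ϱ_{ij}; that is, the top-left n×n block of V, with all registers other than the first ℂⁿ projected onto their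 first basis state, equals ϱ exactly (so V is an exact block-encoding of ϱ). -/
set_option maxHeartbeats 4000000
open Matrix Kronecker BigOperators

theorem exact_block_encoding_from_purification
    (n f m : ℕ) [NeZero n] [NeZero f] [NeZero m]
    (G : Matrix ((Fin n × Fin f) × Fin m) ((Fin n × Fin f) × Fin m) ℂ)
    (hG : G ∈ Matrix.unitaryGroup ((Fin n × Fin f) × Fin m) ℂ)
    (ψ : ((Fin n × Fin f) × Fin m) → ℂ)
    (hψ : ψ = G.mulVec (fun p => if p = ((0, 0), 0) then (1 : ℂ) else 0))
    (ϱ : Matrix (Fin n) (Fin n) ℂ)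
    (hϱ : ϱ = Matrix.of fun i j : Fin n =>
        ∑ k : Fin m, ψ ((i, 0), k) * (starRingEnd ℂ) (ψ ((j, 0), k)))
    (SWAP : Matrix ((Fin n × Fin f) × ((Fin n × Fin f) × Fin m))
        ((Fin n × Fin f) × ((Fin n × Fin f) × Fin m)) ℂ)
    (hSWAP : SWAP = Matrix.of
        fun x y : (Fin n × Fin f) × ((Fin n × Fin f) × Fin m) =>
        if x.1 = y.2.1 ∧ x.2.1 = y.1 ∧ x.2.2 = y.2.2 then (1 : ℂ) else 0)
    (V : Matrix ((Fin n × Fin f) × ((Fin n × Fin f) × Fin m))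
        ((Fin n × Fin f) × ((Fin n × Fin f) × Fin m)) ℂ)
    (hV : V = ((1 : Matrix (Fin n × Fin f) (Fin n × Fin f) ℂ) ⊗ₖ Gᴴ) * SWAP *
        ((1 : Matrix (Fin n × Fin f) (Fin n × Fin f) ℂ) ⊗ₖ G)) :
    ∀ i j : Fin n, V ((i, 0), ((0, 0), 0)) ((j, 0), ((0, 0), 0)) = ϱ i j := by
  intro i j
  subst hψ hϱ hSWAP hV
  have hψ' : ∀ p, G.mulVec (fun p => if p = ((0, 0), 0) then (1 : ℂ) else 0) p
      = G p (((0 : Fin n), (0 : Fin f)), (0 : Fin m)) := by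
    intro p
    simp [Matrix.mulVec, dotProduct]
  simp only [Matrix.mul_apply, Matrix.kroneckerMap_apply, Matrix.of_apply,
    Matrix.one_apply, Matrix.conjTranspose_apply, hψ', Fintype.sum_prod_type]
  simp only [ite_mul, mul_ite, one_mul, zero_mul, mul_one, mul_zero,
    Finset.sum_ite_eq, Finset.sum_ite_eq', Finset.mem_univ, if_true,
    Finset.sum_ite_irrel, Finset.sum_const_zero]
  simp only [Prod.mk.injEq, ite_and, Finset.sum_ite_irrel, Finset.sum_const_zero, mul_ite, mul_zero,
    Finset.sum_ite_eq, Finset.sum_ite_eq', Finset.mem_univ, if_true]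
  simp only [ite_mul, zero_mul, Finset.sum_ite_eq, Finset.mem_univ, if_true]
  simp only [Finset.sum_ite_irrel, Finset.sum_const_zero, Finset.sum_ite_eq,
    Finset.mem_univ, if_true]
  exact Finset.sum_congr rfl fun k _ => mul_comm _ _
end

section
/- Let ϱ⁺, ϱ⁻ ∈ M_n(ℂ) be positive semidefinite matrices, let H := (ϱ⁺ − ϱ⁻)/2 (a Hermitian matrix), let ς⁺ := (ϱ⁺ + ϱ⁻)/2, and let q ∈ ℝ. Write a spectral decomposition H = Σᵢ λᵢ vᵢ vᵢ† with orthonormal eigenvectors vᵢ and real eigenvalues λᵢ (e.g. via the spectral theorem for Hermitian matrices), and define the spectral projector Π := Σ_{i : λᵢ > q} vᵢ vᵢ†. Then q·Π ⪯ Π · ς⁺ · Π, i.e. the matrix Π ς⁺ Π − q Π is positive semidefinite. -/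
open Matrix BigOperators
open scoped ComplexOrder

private lemma psd_smul_real {n : ℕ} {M : Matrix (Fin n) (Fin n) ℂ} (h : M.PosSemidef)
    {r : ℝ} (hr : 0 ≤ r) : ((r : ℂ) • M).PosSemidef := by
  refine posSemidef_iff_dotProduct_mulVec.mpr ⟨?_, fun x => ?_⟩
  · unfold Matrix.IsHermitian
    rw [conjTranspose_smul, h.1.eq]
    norm_num
  · rw [smul_mulVec, dotProduct_smul, smul_eq_mul]
    exact mul_nonneg (by exact_mod_cast hr) (h.dotProduct_mulVec_nonneg x)

theorem spectral_projector_loewner_bound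
    (n : ℕ) (ϱp ϱm : Matrix (Fin n) (Fin n) ℂ)
    (hϱp : ϱp.PosSemidef) (hϱm : ϱm.PosSemidef)
    (H ςp : Matrix (Fin n) (Fin n) ℂ)
    (hHdef : H = (2 : ℂ)⁻¹ • (ϱp - ϱm))
    (hςp : ςp = (2 : ℂ)⁻¹ • (ϱp + ϱm))
    (hH : H.IsHermitian) (q : ℝ)
    (Prj : Matrix (Fin n) (Fin n) ℂ)
    (hPrj : Prj = ∑ i ∈ Finset.univ.filter (fun i => q < hH.eigenvalues i),
        Matrix.vecMulVec
          (fun a => (hH.eigenvectorUnitary : Matrix (Fin n) (Fin n) ℂ) a i)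
          (star fun a => (hH.eigenvectorUnitary : Matrix (Fin n) (Fin n) ℂ) a i)) :
    (Prj * ςp * Prj - (q : ℂ) • Prj).PosSemidef := by
  classical
  set U : Matrix (Fin n) (Fin n) ℂ := (hH.eigenvectorUnitary : Matrix (Fin n) (Fin n) ℂ) with hU
  set S := Finset.univ.filter (fun i => q < hH.eigenvalues i) with hS
  set v : Fin n → (Fin n) → ℂ := fun i a => U a i with hv
  set P : Fin n → Matrix (Fin n) (Fin n) ℂ := fun i => Matrix.vecMulVec (v i) (star (v i)) with hP
  have hPrj' : Prj = ∑ i ∈ S, P i := hPrj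
  -- each v i equals the i-th eigenvector
  have hvEB : ∀ i, v i = ⇑(hH.eigenvectorBasis i) := by
    intro i; funext a
    simp [hv, hU, Matrix.IsHermitian.eigenvectorUnitary_apply]
  -- orthonormality
  have horth : ∀ i j, star (v i) ⬝ᵥ (v j) = if i = j then 1 else 0 := by
    intro i j
    have h1 : (star U * U) i j = (1 : Matrix (Fin n) (Fin n) ℂ) i j := by
      rw [(Matrix.mem_unitaryGroup_iff').mp hH.eigenvectorUnitary.2]
    simpa [Matrix.mul_apply, Matrix.one_apply, dotProduct, hv, mul_comm] using h1
  -- eigenvector equation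
  have heig : ∀ i, H *ᵥ (v i) = ((hH.eigenvalues i : ℝ) : ℂ) • v i := by
    intro i
    rw [hvEB i, hH.mulVec_eigenvectorBasis]
    funext a
    simp [Complex.real_smul]
  -- H * P i = λ i • P i
  have hHP : ∀ i, H * P i = ((hH.eigenvalues i : ℝ) : ℂ) • P i := by
    intro i
    ext a b
    have := congrFun (heig i) a
    simp only [Matrix.mulVec, dotProduct] at this
    simp only [hP, Matrix.mul_apply, Matrix.vecMulVec_apply, Matrix.smul_apply, smul_eq_mul]
    calc ∑ c, H a c * (v i c * star (v i) b)
        = (∑ c, H a c * v i c) * star (v i) b := by rw [Finset.sum_mul]; congr 1; ext c; ring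
      _ = ((hH.eigenvalues i : ℝ) : ℂ) * (v i a * star (v i) b) := by
          rw [this]; simp [Pi.smul_apply]; ring
  -- P i * P j
  have hPP : ∀ i j, P i * P j = if i = j then P i else 0 := by
    intro i j
    ext a b
    simp only [hP, Matrix.mul_apply, Matrix.vecMulVec_apply]
    have : ∑ c, v i a * star (v i) c * (v j c * star (v j) b)
        = (v i a * star (v j) b) * (star (v i) ⬝ᵥ v j) := by
      simp [dotProduct, Finset.mul_sum]; congr 1; ext c; ring
    rw [this, horth i j]
    by_cases h : i = j
    · subst h; simp [Matrix.vecMulVec_apply]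
    · simp [h]
  -- each P i is PosSemidef
  have hPpsd : ∀ i, (P i).PosSemidef := by
    intro i
    have : P i = Matrix.replicateCol (Fin 1) (v i) * (Matrix.replicateCol (Fin 1) (v i))ᴴ := by
      ext a b
      simp [hP, Matrix.mul_apply, Matrix.vecMulVec_apply, Matrix.replicateCol_apply,
        Matrix.conjTranspose_apply]
    rw [this]
    exact Matrix.posSemidef_self_mul_conjTranspose _
  -- Prj is Hermitian
  have hPrjH : Prjᴴ = Prj := by
    rw [hPrj']
    rw [Matrix.conjTranspose_sum]
    refine Finset.sum_congr rfl fun i _ => ?_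
    ext a b
    simp [hP, Matrix.conjTranspose_apply, Matrix.vecMulVec_apply, mul_comm]
  -- ςp = ϱm + H
  have hsum : ςp = ϱm + H := by
    rw [hςp, hHdef]
    ext a b
    simp only [Matrix.add_apply, Matrix.sub_apply, Matrix.smul_apply, smul_eq_mul]
    ring
  -- decompose
  have hdecomp : Prj * ςp * Prj - (q : ℂ) • Prj
      = Prj * ϱm * Prjᴴ + (Prj * H * Prj - (q : ℂ) • (Prj * Prj)) := by
    have hProj2 : Prj * Prj = Prj := by
      rw [hPrj', Finset.sum_mul_sum]
      rw [Finset.sum_congr rfl (fun i _ => Finset.sum_congr rfl (fun j _ => hPP i j))]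
      simp [Finset.sum_ite_eq', hPrj']
    rw [hPrjH, hsum, hProj2]
    noncomm_ring
  rw [hdecomp]
  refine Matrix.PosSemidef.add (hϱm.mul_mul_conjTranspose_same Prj) ?_
  -- second part equals a nonneg combination
  have hkey : Prj * H * Prj - (q : ℂ) • (Prj * Prj)
      = ∑ i ∈ S, ((hH.eigenvalues i - q : ℝ) : ℂ) • P i := by
    have hHPrj : H * Prj = ∑ i ∈ S, ((hH.eigenvalues i : ℝ) : ℂ) • P i := by
      rw [hPrj', Finset.mul_sum]
      exact Finset.sum_congr rfl fun i _ => hHP i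
    have hPrjHPrj : Prj * (H * Prj) = ∑ i ∈ S, ((hH.eigenvalues i : ℝ) : ℂ) • P i := by
      rw [hHPrj, hPrj', Finset.sum_mul_sum]
      have : ∀ i ∈ S, ∀ j ∈ S, P i * (((hH.eigenvalues j : ℝ) : ℂ) • P j)
          = if i = j then ((hH.eigenvalues j : ℝ) : ℂ) • P j else 0 := by
        intro i _ j _
        rw [Matrix.mul_smul, hPP i j]
        by_cases h : i = j <;> simp [h]
      rw [Finset.sum_congr rfl (fun i hi => Finset.sum_congr rfl (fun j hj => this i hi j hj))]
      simp [Finset.sum_ite_eq']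
    have hProj2 : Prj * Prj = Prj := by
      rw [hPrj', Finset.sum_mul_sum]
      rw [Finset.sum_congr rfl (fun i _ => Finset.sum_congr rfl (fun j _ => hPP i j))]
      simp [Finset.sum_ite_eq', hPrj']
    rw [mul_assoc, hPrjHPrj, hProj2, hPrj', Finset.smul_sum, ← Finset.sum_sub_distrib]
    refine Finset.sum_congr rfl fun i _ => ?_
    rw [← sub_smul]
    congr 1
    push_cast
    ring
  rw [hkey]
  refine Finset.sum_induction _ _ (fun a b ha hb => ha.add hb) Matrix.PosSemidef.zero ?_
  intro i hi
  have hiq : q < hH.eigenvalues i := by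
    simpa [hS] using hi
  exact psd_smul_real (hPpsd i) (by linarith)
end

section
/- Let n ≥ 2 and let H ∈ M_n(ℂ) be Hermitian with eigenvalues λ₁,…,λₙ (listed with multiplicity) satisfying Σᵢ |λᵢ| ≤ 1. Let β ≥ 1 and let q be a real number with 2/n ≤ q ≤ 1/β. Then Σ_{i : λᵢ ≤ q} exp(β·λᵢ) ≥ n/(2e); equivalently, tr(Π_{H ≤ q} · e^{βH}) ≥ n/(2e), where Π_{H ≤ q} is the spectral projector of H onto eigenvalues at most q. -/
open Matrix BigOperators

theorem gibbs_low_spectrum_trace_lower_bound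
    (n : ℕ) (hn : 2 ≤ n) (H : Matrix (Fin n) (Fin n) ℂ) (hH : H.IsHermitian)
    (htr : ∑ i, |hH.eigenvalues i| ≤ 1)
    (β q : ℝ) (hβ : 1 ≤ β) (hq₁ : 2 / (n : ℝ) ≤ q) (hq₂ : q ≤ 1 / β) :
    (n : ℝ) / (2 * Real.exp 1) ≤
      ∑ i ∈ Finset.univ.filter (fun i => hH.eigenvalues i ≤ q),
        Real.exp (β * hH.eigenvalues i) := by
  set lam := hH.eigenvalues with hlam
  have hn0 : (0:ℝ) < n := by positivity
  have hq0 : 0 < q := lt_of_lt_of_le (by positivity) hq₁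
  have hβ0 : 0 < β := lt_of_lt_of_le one_pos hβ
  set T : Finset (Fin n) := Finset.univ.filter (fun i => |lam i| ≤ q) with hT
  have hcompl : q * ((Finset.univ.filter (fun i => q < |lam i|)).card : ℝ) ≤ 1 := by
    calc q * ((Finset.univ.filter (fun i => q < |lam i|)).card : ℝ)
        = ∑ _i ∈ Finset.univ.filter (fun i => q < |lam i|), q := by
          rw [Finset.sum_const, nsmul_eq_mul, mul_comm]
      _ ≤ ∑ i ∈ Finset.univ.filter (fun i => q < |lam i|), |lam i| := by
          apply Finset.sum_le_sum
          intro i hi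
          exact le_of_lt (Finset.mem_filter.mp hi).2
      _ ≤ ∑ i, |lam i| := by
          apply Finset.sum_le_sum_of_subset_of_nonneg (Finset.filter_subset _ _)
          intro i _ _; exact abs_nonneg _
      _ ≤ 1 := htr
  have hcardc : ((Finset.univ.filter (fun i => q < |lam i|)).card : ℝ) ≤ n / 2 := by
    have h1 : ((Finset.univ.filter (fun i => q < |lam i|)).card : ℝ) ≤ 1 / q :=
      (le_div_iff₀ hq0).mpr (by linarith [hcompl])
    have h2 : 1 / q ≤ n / 2 := by
      have h3 : 2 ≤ q * n := (div_le_iff₀ hn0).mp hq₁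
      rw [div_le_div_iff₀ hq0 two_pos]
      nlinarith
    linarith
  have hTcard : (n:ℝ) / 2 ≤ (T.card : ℝ) := by
    have := Finset.card_filter_add_card_filter_not (s := (Finset.univ : Finset (Fin n)))
      (p := fun i => |lam i| ≤ q)
    have heq : (Finset.univ.filter (fun i => ¬ |lam i| ≤ q)) =
        (Finset.univ.filter (fun i => q < |lam i|)) := by
      apply Finset.filter_congr; intro i _; simp [not_le]
    rw [heq, Finset.card_univ, Fintype.card_fin] at this
    have : (T.card : ℝ) + ((Finset.univ.filter (fun i => q < |lam i|)).card : ℝ) = n := by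
      exact_mod_cast this
    linarith
  have hsub : T ⊆ Finset.univ.filter (fun i => lam i ≤ q) := by
    intro i hi
    rw [Finset.mem_filter] at hi ⊢
    exact ⟨hi.1, (abs_le.mp hi.2).2⟩
  calc (n : ℝ) / (2 * Real.exp 1)
      ≤ (T.card : ℝ) * Real.exp (-1) := by
        rw [Real.exp_neg]
        rw [div_le_iff₀ (by positivity)] at hTcard ⊢
        · calc (n:ℝ) ≤ T.card * 2 := by linarith
            _ = (T.card : ℝ) * (Real.exp 1)⁻¹ * (2 * Real.exp 1) := by
                field_simp
    _ ≤ ∑ i ∈ T, Real.exp (β * lam i) := by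
        have : (T.card : ℝ) * Real.exp (-1) = ∑ _i ∈ T, Real.exp (-1) := by
          rw [Finset.sum_const, nsmul_eq_mul]
        rw [this]
        apply Finset.sum_le_sum
        intro i hi
        apply Real.exp_le_exp.mpr
        have habs : |lam i| ≤ q := (Finset.mem_filter.mp hi).2
        have : -q ≤ lam i := (abs_le.mp habs).1
        have hβq : β * q ≤ 1 := by
          rw [le_div_iff₀ hβ0] at hq₂; linarith [hq₂]
        nlinarith [hβ0]
    _ ≤ ∑ i ∈ Finset.univ.filter (fun i => lam i ≤ q), Real.exp (β * lam i) := by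
        apply Finset.sum_le_sum_of_subset_of_nonneg hsub
        intro i _ _; positivity
end

section
/- Let H ∈ M_n(ℂ) be Hermitian with eigenvalues λ₁,…,λₙ (listed with multiplicity) satisfying Σᵢ |λᵢ| ≤ 1, let β ≥ 1, and let 0 < η ≤ 1/(4β). Then the Lebesgue measure of the set {x ∈ [1/(2β), 1/β] : ∃ i, |x − |λᵢ|| ≤ η} is at most 8βη. Consequently, a point chosen uniformly at random from the interval [1/(2β), 1/β] has distance greater than η from every |λᵢ| with probability at least 1 − 16β²η. -/
open Matrix BigOperators MeasureTheory

theorem random_point_far_from_spectrum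
    (n : Type*) [Fintype n] [DecidableEq n]
    (H : Matrix n n ℂ) (hH : H.IsHermitian)
    (htr : ∑ i, |hH.eigenvalues i| ≤ 1)
    (β η : ℝ) (hβ : 1 ≤ β) (hη : 0 < η) (hη' : η ≤ 1 / (4 * β)) :
    volume {x : ℝ | x ∈ Set.Icc (1 / (2 * β)) (1 / β) ∧
        ∃ i, abs (x - abs (hH.eigenvalues i)) ≤ η} ≤ ENNReal.ofReal (8 * β * η) ∧
    ENNReal.ofReal (1 - 16 * β ^ 2 * η) ≤
      volume {x : ℝ | x ∈ Set.Icc (1 / (2 * β)) (1 / β) ∧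
          ∀ i, η < abs (x - abs (hH.eigenvalues i))} /
        volume (Set.Icc (1 / (2 * β)) (1 / β)) := by
  have hβ0 : (0:ℝ) < β := lt_of_lt_of_le one_pos hβ
  set a : n → ℝ := fun i => |hH.eigenvalues i| with ha
  classical
  set S : Finset n := Finset.univ.filter (fun i => 1 / (4 * β) ≤ a i) with hS
  -- cardinality bound
  have hcard : (S.card : ℝ) ≤ 4 * β := by
    have h1 : (S.card : ℝ) * (1 / (4 * β)) ≤ ∑ i ∈ S, a i := by
      have := Finset.card_nsmul_le_sum S a (1 / (4 * β))
        (fun i hi => (Finset.mem_filter.mp hi).2)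
      simpa [nsmul_eq_mul] using this
    have h2 : ∑ i ∈ S, a i ≤ 1 := by
      refine le_trans ?_ htr
      exact Finset.sum_le_sum_of_subset_of_nonneg (Finset.subset_univ S)
        (fun i _ _ => abs_nonneg _)
    have h3 : (S.card : ℝ) * (1 / (4 * β)) ≤ 1 := h1.trans h2
    have h4β : (0:ℝ) < 4 * β := by positivity
    rw [mul_one_div, div_le_one h4β] at h3
    exact h3
  -- bad set subset of union of intervals
  have hsub : {x : ℝ | x ∈ Set.Icc (1 / (2 * β)) (1 / β) ∧
      ∃ i, |x - a i| ≤ η} ⊆ ⋃ i ∈ S, Set.Icc (a i - η) (a i + η) := by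
    rintro x ⟨hx, i, hi⟩
    have hai : 1 / (4 * β) ≤ a i := by
      have hx1 : 1 / (2 * β) ≤ x := hx.1
      have h1 : x - a i ≤ η := (abs_le.mp hi).2
      have : 1 / (2 * β) - 1 / (4 * β) ≤ a i := by
        have : x - η ≤ a i := by linarith
        nlinarith
      have heq : 1 / (2 * β) - 1 / (4 * β) = 1 / (4 * β) := by
        field_simp; ring
      linarith [heq ▸ this]
    refine Set.mem_biUnion (Finset.mem_filter.mpr ⟨Finset.mem_univ i, hai⟩) ?_
    have := abs_le.mp hi
    constructor <;> linarith [this.1, this.2]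
  -- volume bound for the bad set
  have hvol : volume {x : ℝ | x ∈ Set.Icc (1 / (2 * β)) (1 / β) ∧
      ∃ i, |x - a i| ≤ η} ≤ ENNReal.ofReal (8 * β * η) := by
    refine le_trans (measure_mono hsub) ?_
    refine le_trans (measure_biUnion_finset_le _ _) ?_
    have hvol1 : ∀ i, volume (Set.Icc (a i - η) (a i + η)) = ENNReal.ofReal (2 * η) := by
      intro i
      rw [Real.volume_Icc]
      congr 1; ring
    calc ∑ i ∈ S, volume (Set.Icc (a i - η) (a i + η))
        = S.card * ENNReal.ofReal (2 * η) := by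
          simp [hvol1, Finset.sum_const, nsmul_eq_mul]
      _ ≤ ENNReal.ofReal (4 * β) * ENNReal.ofReal (2 * η) := by
          gcongr
          calc (S.card : ENNReal) = ENNReal.ofReal (S.card : ℝ) := by simp
            _ ≤ ENNReal.ofReal (4 * β) := ENNReal.ofReal_le_ofReal hcard
      _ = ENNReal.ofReal (8 * β * η) := by
          rw [← ENNReal.ofReal_mul (by positivity)]
          congr 1; ring
  refine ⟨hvol, ?_⟩
  -- second part
  have hIcc : volume (Set.Icc (1 / (2 * β)) (1 / β)) = ENNReal.ofReal (1 / (2 * β)) := by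
    rw [Real.volume_Icc]
    congr 1
    field_simp; ring
  have hne0 : volume (Set.Icc (1 / (2 * β)) (1 / β)) ≠ 0 := by
    rw [hIcc]
    simp only [ne_eq, ENNReal.ofReal_eq_zero, not_le]
    positivity
  have hnetop : volume (Set.Icc (1 / (2 * β)) (1 / β)) ≠ ⊤ := by
    rw [hIcc]; exact ENNReal.ofReal_ne_top
  rw [ENNReal.le_div_iff_mul_le (Or.inl hne0) (Or.inl hnetop)]
  rcases le_or_gt (1 - 16 * β ^ 2 * η) 0 with hneg | hpos
  · simp [ENNReal.ofReal_eq_zero.mpr hneg]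
  · rw [hIcc, ← ENNReal.ofReal_mul hpos.le]
    have hgood : Set.Icc (1 / (2 * β)) (1 / β) \
        {x : ℝ | x ∈ Set.Icc (1 / (2 * β)) (1 / β) ∧ ∃ i, |x - a i| ≤ η} =
        {x : ℝ | x ∈ Set.Icc (1 / (2 * β)) (1 / β) ∧ ∀ i, η < |x - a i|} := by
      ext x
      simp only [Set.mem_diff, Set.mem_setOf_eq, not_and, not_exists, not_le]
      constructor
      · rintro ⟨hx, h⟩; exact ⟨hx, h hx⟩
      · rintro ⟨hx, h⟩; exact ⟨hx, fun _ => h⟩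
    calc ENNReal.ofReal ((1 - 16 * β ^ 2 * η) * (1 / (2 * β)))
        = ENNReal.ofReal (1 / (2 * β) - 8 * β * η) := by
          congr 1; field_simp; ring
      _ = ENNReal.ofReal (1 / (2 * β)) - ENNReal.ofReal (8 * β * η) := by
          rw [ENNReal.ofReal_sub _ (by positivity)]
      _ ≤ volume (Set.Icc (1 / (2 * β)) (1 / β)) -
            volume {x : ℝ | x ∈ Set.Icc (1 / (2 * β)) (1 / β) ∧ ∃ i, |x - a i| ≤ η} := by
          rw [hIcc]; exact tsub_le_tsub_left hvol _
      _ ≤ volume (Set.Icc (1 / (2 * β)) (1 / β) \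
            {x : ℝ | x ∈ Set.Icc (1 / (2 * β)) (1 / β) ∧ ∃ i, |x - a i| ≤ η}) :=
          le_measure_diff
      _ = volume {x : ℝ | x ∈ Set.Icc (1 / (2 * β)) (1 / β) ∧ ∀ i, η < |x - a i|} := by
          rw [hgood]
end

section
/- Let A ∈ M_n(ℂ) be Hermitian with −I ⪯ A ⪯ I, and let N := (1/2) · (I/2 + A/4)^{1/2}, where (·)^{1/2} denotes the positive semidefinite square root of the positive semidefinite matrix I/2 + A/4. Let θ ∈ [0, 1] and let M ∈ M_n(ℂ) satisfy ‖M − N‖ ≤ θ in ℓ2→ℓ2 operator norm. Then for every density operator ρ ∈ M_n(ℂ) (positive semidefinite with trace 1): | tr(M† M ρ) − (1/8 + tr(A ρ)/16) | ≤ 2θ, where tr(M†Mρ) and tr(Aρ) are real. (Thus measuring the ancilla of an approximate block-encoding of (I/2 + A/4)^{1/2} accepts with probability approximately 1/8 + tr(Aρ)/16, which yields an almost unbiased estimator of tr(Aρ).) -/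
open Matrix BigOperators
open scoped ComplexOrder Matrix.Norms.L2Operator

/-- The ℓ2→ℓ2 operator norm of a complex matrix. -/
noncomputable def l2opNorm {m n : Type*} [Fintype m] [Fintype n] [DecidableEq n]
    (A : Matrix m n ℂ) : ℝ :=
  ‖LinearMap.toContinuousLinearMap (Matrix.toEuclideanLin A)‖

section Helpers
variable {n : Type*} [Fintype n] [DecidableEq n]

lemma psd_sqrt_facts {P : Matrix n n ℂ} (hP : P.PosSemidef) :
    ((hP.1.eigenvectorUnitary : Matrix n n ℂ) * diagonal ((↑) ∘ Real.sqrt ∘ hP.1.eigenvalues) *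
      (star hP.1.eigenvectorUnitary : Matrix n n ℂ))ᴴ =
      (hP.1.eigenvectorUnitary : Matrix n n ℂ) * diagonal ((↑) ∘ Real.sqrt ∘ hP.1.eigenvalues) *
      (star hP.1.eigenvectorUnitary : Matrix n n ℂ) ∧
    (hP.1.eigenvectorUnitary : Matrix n n ℂ) * diagonal ((↑) ∘ Real.sqrt ∘ hP.1.eigenvalues) *
      (star hP.1.eigenvectorUnitary : Matrix n n ℂ) *
      ((hP.1.eigenvectorUnitary : Matrix n n ℂ) * diagonal ((↑) ∘ Real.sqrt ∘ hP.1.eigenvalues) *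
      (star hP.1.eigenvectorUnitary : Matrix n n ℂ)) = P := by
  have hu : (star hP.1.eigenvectorUnitary : Matrix n n ℂ) *
      (hP.1.eigenvectorUnitary : Matrix n n ℂ) = 1 :=
    Unitary.star_mul_self_of_mem hP.1.eigenvectorUnitary.2
  constructor
  · have hs : star (Complex.ofReal ∘ Real.sqrt ∘ hP.1.eigenvalues) =
        Complex.ofReal ∘ Real.sqrt ∘ hP.1.eigenvalues := by
      funext i; simp
    rw [conjTranspose_mul, conjTranspose_mul, diagonal_conjTranspose, hs,
      ← star_eq_conjTranspose, ← star_eq_conjTranspose, star_star]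
    simp only [mul_assoc]
  · have hd : diagonal ((↑) ∘ Real.sqrt ∘ hP.1.eigenvalues) *
          diagonal ((↑) ∘ Real.sqrt ∘ hP.1.eigenvalues)
        = diagonal (RCLike.ofReal ∘ hP.1.eigenvalues : n → ℂ) := by
      rw [diagonal_mul_diagonal]
      congr 1; funext i
      simp only [Function.comp_apply]
      rw [← Complex.ofReal_mul, Real.mul_self_sqrt (hP.eigenvalues_nonneg i)]
      rfl
    conv_rhs => rw [hP.1.spectral_theorem, Unitary.conjStarAlgAut_apply]
    rw [← hd]
    simp only [mul_assoc]
    rw [← mul_assoc (star _ : Matrix n n ℂ) _ _, hu, one_mul]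

lemma quad_bound (X : Matrix n n ℂ) (v : n → ℂ) :
    ‖star v ⬝ᵥ (X *ᵥ v)‖ ≤ ‖X‖ * ∑ i, ‖v i‖ ^ 2 := by
  set x : EuclideanSpace ℂ n := (WithLp.equiv 2 (n → ℂ)).symm v with hx
  have h1 : star v ⬝ᵥ (X *ᵥ v) = inner ℂ x ((Matrix.toEuclideanLin X) x) := by
    rw [hx, dotProduct_comm]; rfl
  have hX : ‖(Matrix.toEuclideanLin X) x‖ ≤ ‖X‖ * ‖x‖ :=
    (LinearMap.toContinuousLinearMap (Matrix.toEuclideanLin X)).le_opNorm x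
  have hxn : ‖x‖ ^ 2 = ∑ i, ‖v i‖ ^ 2 := by
    rw [EuclideanSpace.norm_eq, Real.sq_sqrt (by positivity)]
    rfl
  have h2 : ‖star v ⬝ᵥ (X *ᵥ v)‖ ≤ ‖x‖ * (‖X‖ * ‖x‖) := by
    rw [h1]
    exact le_trans (norm_inner_le_norm _ _) (by gcongr)
  calc ‖star v ⬝ᵥ (X *ᵥ v)‖ ≤ ‖x‖ * (‖X‖ * ‖x‖) := h2
    _ = ‖X‖ * ‖x‖ ^ 2 := by ring
    _ = ‖X‖ * ∑ i, ‖v i‖ ^ 2 := by rw [hxn]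

lemma trace_abs_le (X : Matrix n n ℂ) {ρ : Matrix n n ℂ}
    (hρ : ρ.PosSemidef) (htr : ρ.trace = 1) :
    ‖(X * ρ).trace‖ ≤ ‖X‖ := by
  obtain ⟨hBH, hBB⟩ := psd_sqrt_facts hρ
  set B := (hρ.1.eigenvectorUnitary : Matrix n n ℂ) *
    diagonal ((↑) ∘ Real.sqrt ∘ hρ.1.eigenvalues) *
    (star hρ.1.eigenvectorUnitary : Matrix n n ℂ) with hBdef
  have hBij : ∀ i j, B i j = star (B j i) := by
    intro i j
    rw [← Matrix.conjTranspose_apply, hBH]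
  have key : (X * ρ).trace = ∑ i, star (fun j => B j i) ⬝ᵥ (X *ᵥ fun j => B j i) := by
    rw [← hBB, ← mul_assoc, Matrix.trace_mul_cycle, Matrix.trace]
    refine Finset.sum_congr rfl fun i _ => ?_
    simp only [Matrix.diag_apply, Matrix.mul_apply, dotProduct, Matrix.mulVec,
      Pi.star_apply, Finset.sum_mul, Finset.mul_sum]
    rw [Finset.sum_comm]
    refine Finset.sum_congr rfl fun j _ => Finset.sum_congr rfl fun k _ => ?_
    rw [hBij i j]; ring
  have hsum : ∑ i, ∑ j, (‖B j i‖ ^ 2 : ℝ) = 1 := by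
    have h : ((∑ i, ∑ j, (‖B j i‖ ^ 2 : ℝ) : ℝ) : ℂ) = 1 := by
      push_cast
      rw [← htr, ← hBB, Matrix.trace]
      refine (Finset.sum_congr rfl fun i _ => ?_).symm
      simp only [Matrix.diag_apply, Matrix.mul_apply]
      refine Finset.sum_congr rfl fun j _ => ?_
      rw [hBij i j, Complex.star_def, RCLike.conj_mul]
      norm_cast
    exact_mod_cast h
  calc ‖(X * ρ).trace‖
      ≤ ∑ i, ‖star (fun j => B j i) ⬝ᵥ (X *ᵥ fun j => B j i)‖ := by
        rw [key]; exact norm_sum_le _ _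
    _ ≤ ∑ i, ‖X‖ * ∑ j, ‖B j i‖ ^ 2 := Finset.sum_le_sum fun i _ => quad_bound X _
    _ = ‖X‖ * ∑ i, ∑ j, ‖B j i‖ ^ 2 := by rw [Finset.mul_sum]
    _ = ‖X‖ := by rw [hsum, mul_one]

lemma psd_contraction {P : Matrix n n ℂ}
    (hP : P.PosSemidef) (h1P : ((1 : Matrix n n ℂ) - P).PosSemidef) : ‖P‖ ≤ 1 := by
  rw [Matrix.l2_opNorm_def]
  refine ContinuousLinearMap.opNorm_le_bound _ zero_le_one fun x => ?_
  rw [one_mul]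
  set v : n → ℂ := WithLp.equiv 2 (n → ℂ) x with hv
  have hxv : x = (WithLp.equiv 2 (n → ℂ)).symm v := by simp [hv]
  have hPP : (P - P * P).PosSemidef := by
    obtain ⟨hSH, hs⟩ := psd_sqrt_facts hP
    have h2 := h1P.conjTranspose_mul_mul_same ((hP.1.eigenvectorUnitary : Matrix n n ℂ) *
      diagonal ((↑) ∘ Real.sqrt ∘ hP.1.eigenvalues) *
      (star hP.1.eigenvectorUnitary : Matrix n n ℂ))
    have heq : ∀ S : Matrix n n ℂ, Sᴴ = S → S * S = P →
        Sᴴ * ((1 : Matrix n n ℂ) - P) * S = P - P * P := by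
      intro S h1 h2
      rw [h1, ← h2]; noncomm_ring
    rwa [heq _ hSH hs] at h2
  have hinner : ∀ (Y : Matrix n n ℂ),
      star v ⬝ᵥ (Y *ᵥ v) = inner ℂ ((WithLp.equiv 2 (n → ℂ)).symm v)
        ((Matrix.toEuclideanLin Y) ((WithLp.equiv 2 (n → ℂ)).symm v)) := by
    intro Y
    rw [dotProduct_comm]; rfl
  have hy2 : ‖(Matrix.toEuclideanLin P) x‖ ^ 2 = ((star v) ⬝ᵥ ((P * P) *ᵥ v)).re := by
    rw [← inner_self_eq_norm_sq (𝕜 := ℂ), RCLike.re_to_complex]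
    congr 1
    rw [hxv]
    show (P *ᵥ v) ⬝ᵥ star (P *ᵥ v) = _
    rw [dotProduct_comm, Matrix.star_mulVec, ← Matrix.dotProduct_mulVec,
      Matrix.mulVec_mulVec, hP.1]
  have hmono : ((star v) ⬝ᵥ ((P * P) *ᵥ v)).re ≤ ((star v) ⬝ᵥ (P *ᵥ v)).re := by
    have h0 := hPP.dotProduct_mulVec_nonneg v
    rw [Matrix.sub_mulVec, dotProduct_sub] at h0
    have := (Complex.nonneg_iff.mp h0).1
    simp only [Complex.sub_re] at this
    linarith
  have habs : ((star v) ⬝ᵥ (P *ᵥ v)).re ≤ ‖x‖ * ‖(Matrix.toEuclideanLin P) x‖ := by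
    calc ((star v) ⬝ᵥ (P *ᵥ v)).re ≤ ‖((star v) ⬝ᵥ (P *ᵥ v))‖ := Complex.re_le_norm _
      _ = ‖(inner ℂ ((WithLp.equiv 2 (n → ℂ)).symm v)
            ((Matrix.toEuclideanLin P) ((WithLp.equiv 2 (n → ℂ)).symm v)) : ℂ)‖ := by
          rw [hinner P]
      _ ≤ ‖x‖ * ‖(Matrix.toEuclideanLin P) x‖ := by
          rw [← hxv]; exact norm_inner_le_norm _ _
  have : ‖(Matrix.toEuclideanLin P) x‖ ≤ ‖x‖ := by
    nlinarith [norm_nonneg ((Matrix.toEuclideanLin P) x), norm_nonneg x,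
      hy2, hmono, habs]
  exact this

lemma psd_smul_real_s17 {M : Matrix n n ℂ} (hM : M.PosSemidef)
    {c : ℝ} (hc : 0 ≤ c) : ((c : ℂ) • M).PosSemidef := by
  refine Matrix.PosSemidef.of_dotProduct_mulVec_nonneg ?_ ?_
  · have := hM.1
    unfold Matrix.IsHermitian at *
    rw [Matrix.conjTranspose_smul, this]
    congr 1
    simp [Complex.star_def, Complex.conj_ofReal]
  · intro x
    rw [Matrix.smul_mulVec, dotProduct_smul, smul_eq_mul]
    exact mul_nonneg (by exact_mod_cast hc) (hM.dotProduct_mulVec_nonneg x)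

end Helpers
theorem trace_estimator_from_sqrt_block_encoding
    (n : ℕ) (A : Matrix (Fin n) (Fin n) ℂ) (hA : A.IsHermitian)
    (hA₁ : (A + 1).PosSemidef)
    (hA₂ : ((1 : Matrix (Fin n) (Fin n) ℂ) - A).PosSemidef)
    (hP : ((2 : ℂ)⁻¹ • (1 : Matrix (Fin n) (Fin n) ℂ) + (4 : ℂ)⁻¹ • A).PosSemidef)
    (N M : Matrix (Fin n) (Fin n) ℂ)
    (hN : N = (2 : ℂ)⁻¹ • ((hP.1.eigenvectorUnitary : Matrix (Fin n) (Fin n) ℂ) *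
      diagonal ((↑) ∘ Real.sqrt ∘ hP.1.eigenvalues) *
      (star hP.1.eigenvectorUnitary : Matrix (Fin n) (Fin n) ℂ)))
    (θ : ℝ) (hθ₀ : 0 ≤ θ) (hθ₁ : θ ≤ 1)
    (hM : l2opNorm (M - N) ≤ θ) :
    ∀ ρ : Matrix (Fin n) (Fin n) ℂ, ρ.PosSemidef → ρ.trace = 1 →
      ((Mᴴ * M * ρ).trace).im = 0 ∧ ((A * ρ).trace).im = 0 ∧
      |((Mᴴ * M * ρ).trace).re - (1 / 8 + ((A * ρ).trace).re / 16)| ≤ 2 * θ := by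
  intro ρ hρ hρtr
  -- realness of the two traces
  have him : ∀ X : Matrix (Fin n) (Fin n) ℂ, X.IsHermitian → ((X * ρ).trace).im = 0 := by
    intro X hX
    have h1 : (starRingEnd ℂ) ((X * ρ).trace) = (X * ρ).trace := by
      calc (starRingEnd ℂ) ((X * ρ).trace) = ((X * ρ)ᴴ).trace := by
            rw [Matrix.trace_conjTranspose]; rfl
        _ = (ρᴴ * Xᴴ).trace := by rw [Matrix.conjTranspose_mul]
        _ = (ρ * X).trace := by rw [hρ.1, hX]
        _ = (X * ρ).trace := Matrix.trace_mul_comm ρ X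
    exact Complex.conj_eq_iff_im.mp h1
  have hMM : (Mᴴ * M).IsHermitian := Matrix.isHermitian_conjTranspose_mul_self M
  have him1 : ((Mᴴ * M * ρ).trace).im = 0 := him _ hMM
  have him2 : ((A * ρ).trace).im = 0 := him _ hA
  refine ⟨him1, him2, ?_⟩
  -- notation
  set P : Matrix (Fin n) (Fin n) ℂ := (2 : ℂ)⁻¹ • 1 + (4 : ℂ)⁻¹ • A with hPdef
  obtain ⟨hSH, hSS⟩ := psd_sqrt_facts hP
  set S : Matrix (Fin n) (Fin n) ℂ := (hP.1.eigenvectorUnitary : Matrix (Fin n) (Fin n) ℂ) *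
    diagonal ((↑) ∘ Real.sqrt ∘ hP.1.eigenvalues) *
    (star hP.1.eigenvectorUnitary : Matrix (Fin n) (Fin n) ℂ) with hSdef
  -- 1 - P is psd
  have h1P : ((1 : Matrix (Fin n) (Fin n) ℂ) - P).PosSemidef := by
    have ha : ((Complex.ofReal 4⁻¹) • ((1 : Matrix (Fin n) (Fin n) ℂ) - A)).PosSemidef :=
      psd_smul_real_s17 hA₂ (by norm_num)
    have hb : ((Complex.ofReal 4⁻¹) • (1 : Matrix (Fin n) (Fin n) ℂ)).PosSemidef :=
      psd_smul_real_s17 Matrix.PosSemidef.one (by norm_num)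
    have heq : (1 : Matrix (Fin n) (Fin n) ℂ) - P
        = (Complex.ofReal 4⁻¹) • ((1 : Matrix (Fin n) (Fin n) ℂ) - A)
          + (Complex.ofReal 4⁻¹) • (1 : Matrix (Fin n) (Fin n) ℂ) := by
      rw [hPdef]
      push_cast
      ext i j
      simp only [Matrix.sub_apply, Matrix.add_apply, Matrix.smul_apply, Matrix.one_apply,
        smul_eq_mul]
      split <;> ring
    rw [heq]
    exact ha.add hb
  -- norm bounds
  have hPnorm : ‖P‖ ≤ 1 := psd_contraction hP h1P
  have hSnorm : ‖S‖ ≤ 1 := by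
    have h1 : ‖Sᴴ * S‖ = ‖S‖ * ‖S‖ :=
      Matrix.l2_opNorm_conjTranspose_mul_self _
    rw [hSH, hSS] at h1
    nlinarith [norm_nonneg S]
  have hhalf : ‖((2 : ℂ)⁻¹)‖ = (2 : ℝ)⁻¹ := by
    rw [norm_inv]
    norm_num
  have hNnorm : ‖N‖ ≤ 2⁻¹ := by
    rw [hN, norm_smul, hhalf]
    nlinarith
  have hEnorm : ‖M - N‖ ≤ θ := hM
  -- N† N = 4⁻¹ • P
  have hNN : Nᴴ * N = (4 : ℂ)⁻¹ • P := by
    rw [hN, Matrix.conjTranspose_smul, hSH, smul_mul_smul_comm, hSS]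
    congr 1
    simp only [Complex.star_def, map_inv₀, Complex.conj_ofNat]
    norm_num
  -- the perturbation
  set E : Matrix (Fin n) (Fin n) ℂ := M - N with hE
  have hMeq : M = N + E := by rw [hE]; abel
  have hD : Mᴴ * M - (4 : ℂ)⁻¹ • P = Nᴴ * E + Eᴴ * N + Eᴴ * E := by
    rw [← hNN, hMeq, Matrix.conjTranspose_add]
    noncomm_ring
  have hDnorm : ‖Mᴴ * M - (4 : ℂ)⁻¹ • P‖ ≤ 2 * θ := by
    rw [hD]
    have t1 : ‖Nᴴ * E‖ ≤ 2⁻¹ * θ := by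
      calc ‖Nᴴ * E‖ ≤ ‖Nᴴ‖ * ‖E‖ := Matrix.l2_opNorm_mul _ _
        _ = ‖N‖ * ‖E‖ := by rw [Matrix.l2_opNorm_conjTranspose]
        _ ≤ 2⁻¹ * θ := mul_le_mul hNnorm hEnorm (norm_nonneg _) (by norm_num)
    have t2 : ‖Eᴴ * N‖ ≤ 2⁻¹ * θ := by
      calc ‖Eᴴ * N‖ ≤ ‖Eᴴ‖ * ‖N‖ := Matrix.l2_opNorm_mul _ _
        _ = ‖E‖ * ‖N‖ := by rw [Matrix.l2_opNorm_conjTranspose]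
        _ ≤ θ * 2⁻¹ := mul_le_mul hEnorm hNnorm (norm_nonneg _) hθ₀
        _ = 2⁻¹ * θ := by ring
    have t3 : ‖Eᴴ * E‖ ≤ θ := by
      rw [Matrix.l2_opNorm_conjTranspose_mul_self]
      nlinarith [norm_nonneg E]
    calc ‖Nᴴ * E + Eᴴ * N + Eᴴ * E‖ ≤ ‖Nᴴ * E + Eᴴ * N‖ + ‖Eᴴ * E‖ := norm_add_le _ _
      _ ≤ ‖Nᴴ * E‖ + ‖Eᴴ * N‖ + ‖Eᴴ * E‖ := by
          have := norm_add_le (Nᴴ * E) (Eᴴ * N); linarith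
      _ ≤ 2⁻¹ * θ + 2⁻¹ * θ + θ := by linarith
      _ = 2 * θ := by ring
  -- trace bound
  have htrD : ‖((Mᴴ * M - (4 : ℂ)⁻¹ • P) * ρ).trace‖ ≤ 2 * θ :=
    le_trans (trace_abs_le _ hρ hρtr) hDnorm
  -- compute the trace difference
  have hc : ((Mᴴ * M - (4 : ℂ)⁻¹ • P) * ρ).trace
      = (Mᴴ * M * ρ).trace - (1 / 8 + (A * ρ).trace / 16) := by
    rw [Matrix.sub_mul, Matrix.trace_sub, Matrix.smul_mul, Matrix.trace_smul, hPdef,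
      Matrix.add_mul, Matrix.trace_add, Matrix.smul_mul, Matrix.smul_mul, Matrix.trace_smul,
      Matrix.trace_smul, Matrix.one_mul, hρtr]
    simp only [smul_eq_mul]
    ring
  -- conclude
  have hw : (A * ρ).trace = (((A * ρ).trace).re : ℂ) := by
    apply Complex.ext
    · simp
    · simp [him2]
  have hre : (((Mᴴ * M - (4 : ℂ)⁻¹ • P) * ρ).trace).re
      = ((Mᴴ * M * ρ).trace).re - (1 / 8 + ((A * ρ).trace).re / 16) := by
    rw [hc, hw]
    push_cast
    simp [Complex.sub_re, Complex.add_re, Complex.ofReal_re]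
  calc |((Mᴴ * M * ρ).trace).re - (1 / 8 + ((A * ρ).trace).re / 16)|
      = |(((Mᴴ * M - (4 : ℂ)⁻¹ • P) * ρ).trace).re| := by rw [hre]
    _ ≤ ‖((Mᴴ * M - (4 : ℂ)⁻¹ • P) * ρ).trace‖ := Complex.abs_re_le_norm _
    _ ≤ 2 * θ := htrD
end
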